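/- Let m ≥ 1, n = 2m, and A = [[(m+1)I_m, J_m],[J_m, (m+1)I_m]] ∈ S^n. The support graph G_A is the complete bipartite graph K_{m,m}, whose maximal cliques are its m² edges; the fractional edge clique-cover number satisfies c_frac(G_A) = m², and consequently ξ^{cp,wisp}_1(A) ≥ m². -/

import Mathlib

open MvPolynomial Matrix

/-- For `n = 2m` and `A = [[(m+1)Iₘ, Jₘ],[Jₘ, (m+1)Iₘ]]`: the support
graph `G_A` is the complete bipartite graph `K_{m,m}`, whose maximal cliques are its `m²`
edges; `c_frac(G_A) = m²`; and consequently `ξ^{cp,wisp}_1(A) ≥ m²`. -/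
theorem bipartite_example_sparse_bound
    (m p : ℕ) (hm : 1 ≤ m)
    (A : Matrix (Fin m ⊕ Fin m) (Fin m ⊕ Fin m) ℝ)
    (hA : A = fromBlocks (((m : ℝ) + 1) • 1) (of fun _ _ => 1)
      (of fun _ _ => 1) (((m : ℝ) + 1) • 1))
    (G : SimpleGraph (Fin m ⊕ Fin m))
    (hG : ∀ u v, G.Adj u v ↔ u ≠ v ∧ A u v ≠ 0)
    (V : Fin p → Finset (Fin m ⊕ Fin m))
    (hmax : ∀ k, G.IsClique (V k : Set (Fin m ⊕ Fin m)) ∧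
      ∀ S : Finset (Fin m ⊕ Fin m), G.IsClique (S : Set (Fin m ⊕ Fin m)) → V k ⊆ S → S = V k)
    (hall : ∀ S : Finset (Fin m ⊕ Fin m),
      (G.IsClique (S : Set (Fin m ⊕ Fin m)) ∧
        ∀ S' : Finset (Fin m ⊕ Fin m), G.IsClique (S' : Set (Fin m ⊕ Fin m)) → S ⊆ S' → S' = S) →
      ∃ k, V k = S) :
    -- `G_A` is the complete bipartite graph `K_{m,m}`
    G = completeBipartiteGraph (Fin m) (Fin m) ∧
    -- the maximal cliques of `G_A` are exactly its `m²` edges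
    (∀ S : Finset (Fin m ⊕ Fin m),
      (G.IsClique (S : Set (Fin m ⊕ Fin m)) ∧
        ∀ S' : Finset (Fin m ⊕ Fin m), G.IsClique (S' : Set (Fin m ⊕ Fin m)) → S ⊆ S' → S' = S)
      ↔ ∃ (i j : Fin m), S = {Sum.inl i, Sum.inr j}) ∧
    -- `c_frac(G_A) = m²`
    sInf {v : EReal | ∃ x : Fin p → ℝ, (∀ k, 0 ≤ x k) ∧
        (∀ u v : Fin m ⊕ Fin m, u ≠ v → A u v ≠ 0 →
          1 ≤ ∑ k ∈ Finset.univ.filter (fun k => u ∈ V k ∧ v ∈ V k), x k) ∧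
        v = ((∑ k, x k : ℝ) : EReal)}
      = (((m : ℝ) ^ 2 : ℝ) : EReal) ∧
    -- `ξ^{cp,wisp}_1(A) ≥ m²`
    (((m : ℝ) ^ 2 : ℝ) : EReal)
      ≤ sInf {v : EReal | ∃ L : Fin p → (MvPolynomial (Fin m ⊕ Fin m) ℝ →ₗ[ℝ] ℝ),
        (∀ u v : Fin m ⊕ Fin m, ∑ k ∈ Finset.univ.filter (fun k => u ∈ V k ∧ v ∈ V k),
          L k (X u * X v) = A u v) ∧
        (∀ k, ∀ q : MvPolynomial (Fin m ⊕ Fin m) ℝ, q.totalDegree ≤ 1 → q.vars ⊆ V k →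
          0 ≤ L k (q * q)) ∧
        (∀ k, ∀ u ∈ V k, 0 ≤ L k (C (Real.sqrt (A u u)) * X u - X u ^ 2)) ∧
        (∀ k, ∀ u ∈ V k, ∀ v ∈ V k, u ≠ v → 0 ≤ L k (C (A u v) - X u * X v)) ∧
        (∀ k, Matrix.PosSemidef (Matrix.of (fun u v : ↥(V k) =>
          L k 1 * A (u : Fin m ⊕ Fin m) (v : Fin m ⊕ Fin m)
            - L k (X (u : Fin m ⊕ Fin m) * X (v : Fin m ⊕ Fin m))))) ∧
        v = ((∑ k, L k 1 : ℝ) : EReal)} := by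
  classical
  subst hA
  set A : Matrix (Fin m ⊕ Fin m) (Fin m ⊕ Fin m) ℝ :=
    fromBlocks (((m : ℝ) + 1) • 1) (of fun _ _ => 1) (of fun _ _ => 1) (((m : ℝ) + 1) • 1)
    with hA
  -- matrix entries
  have hAll : ∀ i j : Fin m, A (Sum.inl i) (Sum.inl j) = if i = j then (m : ℝ) + 1 else 0 := by
    intro i j
    simp [hA, fromBlocks_apply₁₁, Matrix.smul_apply, Matrix.one_apply, mul_ite]
  have hArr : ∀ i j : Fin m, A (Sum.inr i) (Sum.inr j) = if i = j then (m : ℝ) + 1 else 0 := by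
    intro i j
    simp [hA, fromBlocks_apply₂₂, Matrix.smul_apply, Matrix.one_apply, mul_ite]
  have hAlr : ∀ i j : Fin m, A (Sum.inl i) (Sum.inr j) = 1 := by
    intro i j; simp [hA, fromBlocks_apply₁₂]
  have hArl : ∀ i j : Fin m, A (Sum.inr i) (Sum.inl j) = 1 := by
    intro i j; simp [hA, fromBlocks_apply₂₁]
  have hm1 : ((m : ℝ) + 1) ≠ 0 := by positivity
  -- part 1 : G is the complete bipartite graph
  have hG1 : G = completeBipartiteGraph (Fin m) (Fin m) := by
    ext u v
    rw [hG, completeBipartiteGraph_adj]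
    rcases u with i | i <;> rcases v with j | j
    · constructor
      · rintro ⟨hne, hA0⟩
        have hij : i ≠ j := fun h => hne (by rw [h])
        exact absurd (by rw [hAll, if_neg hij]) hA0
      · intro h
        simp at h
    · constructor
      · intro _
        simp
      · intro _
        refine ⟨Sum.inl_ne_inr, ?_⟩
        rw [hAlr]
        norm_num
    · constructor
      · intro _
        simp
      · intro _
        refine ⟨Sum.inr_ne_inl, ?_⟩
        rw [hArl]
        norm_num
    · constructor
      · rintro ⟨hne, hA0⟩
        have hij : i ≠ j := fun h => hne (by rw [h])
        exact absurd (by rw [hArr, if_neg hij]) hA0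
      · intro h
        simp at h
  have hadj : ∀ u v, G.Adj u v ↔
      ((∃ i j : Fin m, u = Sum.inl i ∧ v = Sum.inr j) ∨
        (∃ i j : Fin m, u = Sum.inr i ∧ v = Sum.inl j)) := by
    intro u v
    rw [hG1]
    rcases u with i | i <;> rcases v with j | j <;> simp
  -- pairs are maximal cliques
  have hpair_clique : ∀ i j : Fin m,
      G.IsClique (({Sum.inl i, Sum.inr j} : Finset (Fin m ⊕ Fin m)) :
        Set (Fin m ⊕ Fin m)) := by
    intro i j a ha b hb hab
    simp only [Finset.coe_insert, Finset.coe_singleton, Set.mem_insert_iff,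
      Set.mem_singleton_iff] at ha hb
    rcases ha with rfl | rfl <;> rcases hb with rfl | rfl
    · exact absurd rfl hab
    · exact (hadj _ _).mpr (Or.inl ⟨_, _, rfl, rfl⟩)
    · exact (hadj _ _).mpr (Or.inr ⟨_, _, rfl, rfl⟩)
    · exact absurd rfl hab
  have hpair_max : ∀ (i j : Fin m) (S' : Finset (Fin m ⊕ Fin m)),
      G.IsClique (S' : Set (Fin m ⊕ Fin m)) →
      ({Sum.inl i, Sum.inr j} : Finset (Fin m ⊕ Fin m)) ⊆ S' →
      S' = {Sum.inl i, Sum.inr j} := by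
    intro i j S' hS' hsub
    apply Finset.Subset.antisymm _ hsub
    intro u hu
    have hiS : Sum.inl i ∈ S' := hsub (by simp)
    have hjS : Sum.inr j ∈ S' := hsub (by simp)
    rcases u with x | x
    · have : x = i := by
        by_contra hx
        have := hS' hu hiS (by simp [hx])
        rw [hadj] at this
        rcases this with ⟨_, _, h1, h2⟩ | ⟨_, _, h1, h2⟩
        · exact nomatch h2
        · exact nomatch h1
      simp [this]
    · have : x = j := by
        by_contra hx
        have := hS' hu hjS (by simp [hx])
        rw [hadj] at this
        rcases this with ⟨_, _, h1, h2⟩ | ⟨_, _, h1, h2⟩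
        · exact nomatch h1
        · exact nomatch h2
      simp [this]
  -- part 2 : characterisation of maximal cliques
  have hchar : ∀ S : Finset (Fin m ⊕ Fin m),
      (G.IsClique (S : Set (Fin m ⊕ Fin m)) ∧
        ∀ S' : Finset (Fin m ⊕ Fin m), G.IsClique (S' : Set (Fin m ⊕ Fin m)) → S ⊆ S' → S' = S)
      ↔ ∃ (i j : Fin m), S = {Sum.inl i, Sum.inr j} := by
    intro S
    constructor
    · rintro ⟨hcl, hmx⟩
      have h1 : ∀ x y : Fin m, Sum.inl x ∈ S → Sum.inl y ∈ S → x = y := by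
        intro x y hx hy
        by_contra hxy
        have := hcl hx hy (by simp [hxy])
        rw [hadj] at this
        rcases this with ⟨_, _, e1, e2⟩ | ⟨_, _, e1, e2⟩
        · exact nomatch e2
        · exact nomatch e1
      have h2 : ∀ x y : Fin m, Sum.inr x ∈ S → Sum.inr y ∈ S → x = y := by
        intro x y hx hy
        by_contra hxy
        have := hcl hx hy (by simp [hxy])
        rw [hadj] at this
        rcases this with ⟨_, _, e1, e2⟩ | ⟨_, _, e1, e2⟩
        · exact nomatch e1
        · exact nomatch e2
      have hexi : ∃ i : Fin m, ∀ x : Fin m, Sum.inl x ∈ S → x = i := by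
        by_cases h : ∃ x : Fin m, Sum.inl x ∈ S
        · obtain ⟨x, hx⟩ := h
          exact ⟨x, fun y hy => h1 y x hy hx⟩
        · exact ⟨⟨0, hm⟩, fun y hy => absurd ⟨y, hy⟩ h⟩
      have hexj : ∃ j : Fin m, ∀ x : Fin m, Sum.inr x ∈ S → x = j := by
        by_cases h : ∃ x : Fin m, Sum.inr x ∈ S
        · obtain ⟨x, hx⟩ := h
          exact ⟨x, fun y hy => h2 y x hy hx⟩
        · exact ⟨⟨0, hm⟩, fun y hy => absurd ⟨y, hy⟩ h⟩
      obtain ⟨i, hi⟩ := hexi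
      obtain ⟨j, hj⟩ := hexj
      have hsub : S ⊆ ({Sum.inl i, Sum.inr j} : Finset (Fin m ⊕ Fin m)) := by
        intro u hu
        rcases u with x | x
        · simp [hi x hu]
        · simp [hj x hu]
      exact ⟨i, j, (hmx _ (hpair_clique i j) hsub).symm⟩
    · rintro ⟨i, j, rfl⟩
      exact ⟨hpair_clique i j, fun S' h1 h2 => hpair_max i j S' h1 h2⟩
  -- each V k is a pair
  have hVk : ∀ k, ∃ (i j : Fin m), V k = {Sum.inl i, Sum.inr j} :=
    fun k => (hchar (V k)).mp (hmax k)
  choose ek jk hk using hVk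
  -- membership in V k
  have hmem : ∀ (k) (i j : Fin m),
      (Sum.inl i ∈ V k ∧ Sum.inr j ∈ V k) ↔ (ek k, jk k) = (i, j) := by
    intro k i j
    rw [hk k]
    constructor
    · rintro ⟨h1, h2⟩
      simp only [Finset.mem_insert, Finset.mem_singleton] at h1 h2
      rcases h1 with h1 | h1
      · rcases h2 with h2 | h2
        · exact nomatch h2
        · rw [Prod.mk.injEq]
          exact ⟨(Sum.inl.inj h1).symm, (Sum.inr.inj h2).symm⟩
      · exact nomatch h1
    · rintro h
      rw [Prod.mk.injEq] at h
      obtain ⟨rfl, rfl⟩ := h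
      simp
  have hfilter : ∀ i j : Fin m,
      (Finset.univ.filter (fun k => Sum.inl i ∈ V k ∧ Sum.inr j ∈ V k))
        = (Finset.univ.filter (fun k => (ek k, jk k) = (i, j))) := by
    intro i j
    apply Finset.filter_congr
    intro k _
    exact hmem k i j
  have hfibersum : ∀ f : Fin p → ℝ,
      ∑ k, f k = ∑ ij : Fin m × Fin m,
        ∑ k ∈ Finset.univ.filter (fun k => (ek k, jk k) = ij), f k := by
    intro f
    exact (Finset.sum_fiberwise Finset.univ (fun k => (ek k, jk k)) f).symm
  have hcardsq : ∑ _ij : Fin m × Fin m, (1 : ℝ) = (m : ℝ) ^ 2 := by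
    rw [Finset.sum_const, Finset.card_univ, Fintype.card_prod]
    push_cast [nsmul_eq_mul]
    rw [Fintype.card_fin]
    ring
  refine ⟨hG1, hchar, ?_, ?_⟩
  · -- c_frac = m²
    -- choose a clique index for each pair
    have hc : ∀ ij : Fin m × Fin m, ∃ k, V k = {Sum.inl ij.1, Sum.inr ij.2} := by
      intro ij
      exact hall _ ((hchar _).mpr ⟨ij.1, ij.2, rfl⟩)
    choose c hcV using hc
    have hx0 : ∀ k, (0:ℝ) ≤ ((Finset.univ.filter (fun ij : Fin m × Fin m => c ij = k)).card : ℝ) :=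
      fun k => by positivity
    set x : Fin p → ℝ :=
      fun k => ((Finset.univ.filter (fun ij : Fin m × Fin m => c ij = k)).card : ℝ) with hxdef
    have hxsum : ∑ k, x k = (m : ℝ) ^ 2 := by
      rw [hxdef]
      rw [← Nat.cast_sum,
        ← Finset.card_eq_sum_card_fiberwise
          (fun (ij : Fin m × Fin m) (_ : ij ∈ Finset.univ) => Finset.mem_univ (c ij)),
        Finset.card_univ, Fintype.card_prod]
      push_cast
      rw [Fintype.card_fin]
      ring
    have hxfeas : ∀ u v : Fin m ⊕ Fin m, u ≠ v → A u v ≠ 0 →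
        1 ≤ ∑ k ∈ Finset.univ.filter (fun k => u ∈ V k ∧ v ∈ V k), x k := by
      have key : ∀ i j : Fin m,
          1 ≤ ∑ k ∈ Finset.univ.filter (fun k => Sum.inl i ∈ V k ∧ Sum.inr j ∈ V k), x k := by
        intro i j
        have hmemc : c (i, j) ∈
            Finset.univ.filter (fun k => Sum.inl i ∈ V k ∧ Sum.inr j ∈ V k) := by
          simp [Finset.mem_filter, hcV (i, j)]
        have h1 : 1 ≤ x (c (i, j)) := by
          have hmemf : (i, j) ∈ Finset.univ.filter (fun ij : Fin m × Fin m => c ij = c (i, j)) := by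
            simp
          exact Nat.one_le_cast.mpr (Finset.card_pos.mpr ⟨(i, j), hmemf⟩)
        calc (1 : ℝ) ≤ x (c (i, j)) := h1
          _ ≤ _ := Finset.single_le_sum (fun k _ => hx0 k) hmemc
      intro u v huv hAuv
      rcases u with i | i <;> rcases v with j | j
      · exfalso
        apply hAuv
        rw [hAll]
        simp only [Sum.inl.injEq, ne_eq] at huv
        simp [huv]
      · exact key i j
      · have : (Finset.univ.filter (fun k => Sum.inr i ∈ V k ∧ Sum.inl j ∈ V k))
            = (Finset.univ.filter (fun k => Sum.inl j ∈ V k ∧ Sum.inr i ∈ V k)) := by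
          apply Finset.filter_congr; intro k _; exact and_comm
        rw [this]
        exact key j i
      · exfalso
        apply hAuv
        rw [hArr]
        simp only [Sum.inr.injEq, ne_eq] at huv
        simp [huv]
    have hLB : ∀ y : Fin p → ℝ, (∀ k, 0 ≤ y k) →
        (∀ u v : Fin m ⊕ Fin m, u ≠ v → A u v ≠ 0 →
          1 ≤ ∑ k ∈ Finset.univ.filter (fun k => u ∈ V k ∧ v ∈ V k), y k) →
        (m : ℝ) ^ 2 ≤ ∑ k, y k := by
      intro y hy0 hyfeas
      rw [hfibersum y, ← hcardsq]
      apply Finset.sum_le_sum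
      rintro ⟨i, j⟩ _
      have hne : (Sum.inl i : Fin m ⊕ Fin m) ≠ Sum.inr j := by simp
      have hA0 : A (Sum.inl i) (Sum.inr j) ≠ 0 := by rw [hAlr]; norm_num
      have := hyfeas _ _ hne hA0
      rwa [hfilter i j] at this
    apply le_antisymm
    · apply sInf_le
      exact ⟨x, hx0, hxfeas, by rw [hxsum]⟩
    · apply le_sInf
      rintro v ⟨y, hy0, hyfeas, rfl⟩
      exact EReal.coe_le_coe_iff.mpr (hLB y hy0 hyfeas)
  · -- ξ ≥ m²
    apply le_sInf
    rintro v ⟨L, hlin, _hpsd, _hsqrt, hprod, _hmat, rfl⟩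
    rw [EReal.coe_le_coe_iff]
    have hLC : ∀ (k : Fin p) (r : ℝ), L k (C r) = r * L k 1 := by
      intro k r
      calc L k (C r) = L k (r • 1) := by rw [smul_eq_C_mul, mul_one]
        _ = r * L k 1 := by rw [LinearMap.map_smul, smul_eq_mul]
    rw [hfibersum (fun k => L k 1), ← hcardsq]
    apply Finset.sum_le_sum
    rintro ⟨i, j⟩ _
    have hfib := hfilter i j
    have h1 : ∑ k ∈ Finset.univ.filter (fun k => (ek k, jk k) = (i, j)),
        L k (X (Sum.inl i) * X (Sum.inr j)) = 1 := by
      rw [← hfib, hlin (Sum.inl i) (Sum.inr j), hAlr]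
    calc (1 : ℝ)
        = ∑ k ∈ Finset.univ.filter (fun k => (ek k, jk k) = (i, j)),
            L k (X (Sum.inl i) * X (Sum.inr j)) := h1.symm
      _ ≤ ∑ k ∈ Finset.univ.filter (fun k => (ek k, jk k) = (i, j)), L k 1 := by
          apply Finset.sum_le_sum
          intro k hkmem
          rw [Finset.mem_filter] at hkmem
          have hm2 := (hmem k i j).mpr hkmem.2
          have hiV : Sum.inl i ∈ V k := hm2.1
          have hjV : Sum.inr j ∈ V k := hm2.2
          have := hprod k (Sum.inl i) hiV (Sum.inr j) hjV (by simp)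
          rw [map_sub, hLC, hAlr] at this
          linarith
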